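/- arXiv:1904.12157 — 2 statements merged into one kernel-verified Lean document; each statement's English description precedes it below -/
import Mathlib

section
/- If z is a real random variable with law N(μ, σ²) for μ ∈ ℝ and σ > 0, then E[min(1, e^z)] = Φ(μ/σ) + exp(μ + σ²/2)·Φ(−σ − μ/σ). -/
open MeasureTheory ProbabilityTheory
open scoped NNReal ENNReal

/-- The standard normal cumulative distribution function
`Φ(x) = ∫_{−∞}^x (2π)^{−1/2} e^{−t²/2} dt`. -/
noncomputable def Phi (x : ℝ) : ℝ :=
  ∫ t in Set.Iic x, (Real.sqrt (2 * Real.pi))⁻¹ * Real.exp (-t ^ 2 / 2)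

lemma stdNormalPDF_eq : (fun t : ℝ => (Real.sqrt (2 * Real.pi))⁻¹ * Real.exp (-t ^ 2 / 2))
    = gaussianPDFReal 0 1 := by
  ext t
  simp [gaussianPDFReal]

lemma Phi_add_Phi_neg (x : ℝ) : Phi x + Phi (-x) = 1 := by
  have hint : Integrable (fun t : ℝ => (Real.sqrt (2 * Real.pi))⁻¹ * Real.exp (-t ^ 2 / 2)) := by
    rw [stdNormalPDF_eq]; exact integrable_gaussianPDFReal 0 1
  have htot : ∫ t : ℝ, (Real.sqrt (2 * Real.pi))⁻¹ * Real.exp (-t ^ 2 / 2) = 1 := by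
    rw [stdNormalPDF_eq]; exact integral_gaussianPDFReal_eq_one 0 one_ne_zero
  have hneg : Phi (-x)
      = ∫ t in Set.Ioi x, (Real.sqrt (2 * Real.pi))⁻¹ * Real.exp (-t ^ 2 / 2) := by
    rw [Phi, ← integral_comp_neg_Ioi]
    congr 1
    ext t
    rw [neg_pow]
    ring_nf
  rw [hneg, Phi]
  rw [← Set.compl_Iic]
  rw [integral_add_compl measurableSet_Iic hint, htot]

/-- CDF of a gaussian via `Phi`. -/
lemma gaussian_Iic_eq_Phi {σ : ℝ} (hσ : 0 < σ) (m a : ℝ) :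
    ∫ x in Set.Iic a, gaussianPDFReal m ((σ ^ 2).toNNReal) x = Phi ((a - m) / σ) := by
  have hσ' : σ ≠ 0 := hσ.ne'
  have hv : ((σ ^ 2).toNNReal : ℝ) = σ ^ 2 := Real.coe_toNNReal _ (sq_nonneg σ)
  set f := gaussianPDFReal m ((σ ^ 2).toNNReal) with hf
  set c := (a - m) / σ with hc
  have key : ∀ t : ℝ, f (σ * t + m)
      = σ⁻¹ * ((Real.sqrt (2 * Real.pi))⁻¹ * Real.exp (-t ^ 2 / 2)) := by
    intro t
    simp only [hf, gaussianPDFReal, hv]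
    rw [show 2 * Real.pi * σ ^ 2 = (2 * Real.pi) * σ ^ 2 by ring,
      Real.sqrt_mul (by positivity), Real.sqrt_sq hσ.le]
    have h1 : -(σ * t + m - m) ^ 2 / (2 * σ ^ 2) = -t ^ 2 / 2 := by
      field_simp
      ring
    rw [h1, mul_inv]
    ring
  have hind : ∀ t : ℝ, Set.indicator (Set.Iic a) f (σ * t + m)
      = Set.indicator (Set.Iic c) (fun t => f (σ * t + m)) t := by
    intro t
    by_cases ht : t ≤ c
    · have hx : σ * t + m ≤ a := by
        rw [hc, le_div_iff₀ hσ] at ht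
        nlinarith
      rw [Set.indicator_of_mem (Set.mem_Iic.mpr hx) f, Set.indicator_of_mem (Set.mem_Iic.mpr ht)]
    · have hx : ¬ (σ * t + m ≤ a) := by
        rw [not_le] at ht ⊢
        rw [hc, div_lt_iff₀ hσ] at ht
        nlinarith
      rw [Set.indicator_of_notMem (fun h => hx (Set.mem_Iic.mp h)) f, Set.indicator_of_notMem (fun h => ht (Set.mem_Iic.mp h))]
  have h1 : ∫ t : ℝ, Set.indicator (Set.Iic a) f (σ * t + m)
      = |σ⁻¹| • ∫ y : ℝ, Set.indicator (Set.Iic a) f (y + m) :=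
    Measure.integral_comp_mul_left (fun y => Set.indicator (Set.Iic a) f (y + m)) σ
  have h2 : ∫ y : ℝ, Set.indicator (Set.Iic a) f (y + m)
      = ∫ x : ℝ, Set.indicator (Set.Iic a) f x :=
    integral_add_right_eq_self _ m
  have h3 : ∫ t : ℝ, Set.indicator (Set.Iic a) f (σ * t + m) = σ⁻¹ * Phi c := by
    simp_rw [hind]
    rw [integral_indicator measurableSet_Iic]
    simp_rw [key]
    rw [integral_const_mul]
    rfl
  rw [h2, abs_of_pos (inv_pos.mpr hσ), smul_eq_mul] at h1
  rw [h3] at h1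
  have := mul_left_cancel₀ (inv_ne_zero hσ') h1.symm
  rw [← integral_indicator measurableSet_Iic, ← this]

/-- Exponential tilting of the gaussian density. -/
lemma tilt {σ : ℝ} (hσ : 0 < σ) (μ : ℝ) (x : ℝ) :
    gaussianPDFReal μ ((σ ^ 2).toNNReal) x * Real.exp x
      = Real.exp (μ + σ ^ 2 / 2) * gaussianPDFReal (μ + σ ^ 2) ((σ ^ 2).toNNReal) x := by
  have hσ' : σ ≠ 0 := hσ.ne'
  have hv : ((σ ^ 2).toNNReal : ℝ) = σ ^ 2 := Real.coe_toNNReal _ (sq_nonneg σ)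
  simp only [gaussianPDFReal, hv]
  rw [mul_assoc, ← Real.exp_add, mul_left_comm, ← Real.exp_add]
  have h : -(x - μ) ^ 2 / (2 * σ ^ 2) + x
      = μ + σ ^ 2 / 2 + -(x - (μ + σ ^ 2)) ^ 2 / (2 * σ ^ 2) := by
    field_simp
    ring
  rw [h]

/-- If `z ∼ N(μ, σ²)` with `σ > 0`, then
`E[min(1, e^z)] = Φ(μ/σ) + exp(μ + σ²/2)·Φ(−σ − μ/σ)`. -/
theorem integral_min_one_exp_gaussian (μ σ : ℝ) (hσ : 0 < σ) :
    ∫ z, min 1 (Real.exp z) ∂(gaussianReal μ ((σ ^ 2).toNNReal)) =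
      Phi (μ / σ) + Real.exp (μ + σ ^ 2 / 2) * Phi (-σ - μ / σ) := by
  have hσ' : σ ≠ 0 := hσ.ne'
  set v : ℝ≥0 := (σ ^ 2).toNNReal with hvdef
  have hv0 : v ≠ 0 := by
    simp only [hvdef, ne_eq, Real.toNNReal_eq_zero, not_le]
    positivity
  rw [gaussianReal_of_var_ne_zero _ hv0]
  have hwd : ∫ z, min 1 (Real.exp z) ∂(volume.withDensity (gaussianPDF μ v))
      = ∫ z, gaussianPDFReal μ v z * min 1 (Real.exp z) := by
    rw [show gaussianPDF μ v = fun x => ((Real.toNNReal (gaussianPDFReal μ v x) : ℝ≥0) : ℝ≥0∞)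
      from rfl]
    rw [integral_withDensity_eq_integral_smul ((measurable_gaussianPDFReal μ v).real_toNNReal)]
    congr 1
    ext z
    rw [NNReal.smul_def, smul_eq_mul, Real.coe_toNNReal _ (gaussianPDFReal_nonneg μ v z)]
  rw [hwd]
  set g := fun z : ℝ => gaussianPDFReal μ v z * min 1 (Real.exp z) with hg
  have hmin_nonneg : ∀ z : ℝ, 0 ≤ min 1 (Real.exp z) := fun z =>
    le_min zero_le_one (Real.exp_nonneg z)
  have hmin_le : ∀ z : ℝ, min 1 (Real.exp z) ≤ 1 := fun z => min_le_left _ _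
  have hgm : AEStronglyMeasurable g volume :=
    ((measurable_gaussianPDFReal μ v).mul
      (measurable_const.min Real.measurable_exp)).aestronglyMeasurable
  have hint : Integrable g := by
    refine Integrable.mono' (integrable_gaussianPDFReal μ v) hgm (ae_of_all _ fun z => ?_)
    rw [hg, Real.norm_eq_abs, abs_mul, abs_of_nonneg (gaussianPDFReal_nonneg μ v z),
      abs_of_nonneg (hmin_nonneg z)]
    calc gaussianPDFReal μ v z * min 1 (Real.exp z)
        ≤ gaussianPDFReal μ v z * 1 :=
          mul_le_mul_of_nonneg_left (hmin_le z) (gaussianPDFReal_nonneg μ v z)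
      _ = gaussianPDFReal μ v z := mul_one _
  rw [← integral_add_compl (measurableSet_Iic (a := (0 : ℝ))) hint, Set.compl_Iic]
  have hIic : ∫ z in Set.Iic (0 : ℝ), g z
      = Real.exp (μ + σ ^ 2 / 2) * Phi (-σ - μ / σ) := by
    have hcong : ∀ z ∈ Set.Iic (0 : ℝ), g z
        = Real.exp (μ + σ ^ 2 / 2) * gaussianPDFReal (μ + σ ^ 2) v z := by
      intro z hz
      rw [hg]
      simp only
      rw [min_eq_right (Real.exp_le_one_iff.mpr hz), tilt hσ]
    rw [setIntegral_congr_fun measurableSet_Iic hcong, integral_const_mul,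
      gaussian_Iic_eq_Phi hσ]
    congr 2
    field_simp
    ring
  have hIoi : ∫ z in Set.Ioi (0 : ℝ), g z = Phi (μ / σ) := by
    have hcong : ∀ z ∈ Set.Ioi (0 : ℝ), g z = gaussianPDFReal μ v z := by
      intro z hz
      rw [hg]
      simp only
      rw [min_eq_left (Real.one_le_exp (le_of_lt hz)), mul_one]
    rw [setIntegral_congr_fun measurableSet_Ioi hcong]
    have hsplit : (∫ z in Set.Iic (0 : ℝ), gaussianPDFReal μ v z)
        + ∫ z in Set.Ioi (0 : ℝ), gaussianPDFReal μ v z = 1 := by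
      rw [← Set.compl_Iic,
        integral_add_compl measurableSet_Iic (integrable_gaussianPDFReal μ v)]
      exact integral_gaussianPDFReal_eq_one μ hv0
    have hI : ∫ z in Set.Iic (0 : ℝ), gaussianPDFReal μ v z = Phi (-(μ / σ)) := by
      rw [gaussian_Iic_eq_Phi hσ]
      congr 1
      field_simp
      ring
    have hphi := Phi_add_Phi_neg (μ / σ)
    rw [hI] at hsplit
    linarith
  rw [hIic, hIoi]
  ring
end

section
/- Let (Ω, P) be a probability space and I: Ω → [0, ∞) a measurable random variable. Define h(ℓ) = 2ℓ²·E[Φ(−ℓ·√I/2)] for ℓ > 0. If ℓ̂ ∈ (0, ∞) satisfies h(ℓ̂) ≥ h(ℓ) for all ℓ > 0, then the first-order stationarity condition holds: 2·E[Φ(−ℓ̂·√I/2)] = E[(ℓ̂·√I/2)·φ(ℓ̂·√I/2)]. -/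
open MeasureTheory

/-- The standard normal density `φ(x) = (2π)^{−1/2} e^{−x²/2}`. -/
noncomputable def phi (x : ℝ) : ℝ :=
  (Real.sqrt (2 * Real.pi))⁻¹ * Real.exp (-x ^ 2 / 2)

lemma gdens_eq (t : ℝ) : (Real.sqrt (2 * Real.pi))⁻¹ * Real.exp (-t ^ 2 / 2)
    = (Real.sqrt (2 * Real.pi))⁻¹ * Real.exp (-(1/2) * t ^ 2) := by ring_nf

lemma gdens_integrable :
    Integrable (fun t : ℝ => (Real.sqrt (2 * Real.pi))⁻¹ * Real.exp (-t ^ 2 / 2)) := by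
  have h := (integrable_exp_neg_mul_sq (by norm_num : (0:ℝ) < 1/2)).const_mul
    (Real.sqrt (2 * Real.pi))⁻¹
  have e : (fun t : ℝ => (Real.sqrt (2 * Real.pi))⁻¹ * Real.exp (-t ^ 2 / 2))
      = fun t : ℝ => (Real.sqrt (2 * Real.pi))⁻¹ * Real.exp (-(1/2) * t ^ 2) :=
    funext fun t => by ring_nf
  rw [e]; exact h

lemma gdens_cont : Continuous (fun t : ℝ => (Real.sqrt (2 * Real.pi))⁻¹ * Real.exp (-t ^ 2 / 2)) := by
  fun_prop

lemma phi_cont : Continuous phi := by unfold phi; fun_prop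

lemma phi_nonneg (x : ℝ) : 0 ≤ phi x := by
  unfold phi
  positivity

lemma phi_neg (x : ℝ) : phi (-x) = phi x := by simp [phi]

lemma hasDerivAt_Phi (x : ℝ) : HasDerivAt Phi (phi x) x := by
  have key : ∀ y : ℝ, Phi y = Phi 0 + ∫ t in (0:ℝ)..y,
      (Real.sqrt (2 * Real.pi))⁻¹ * Real.exp (-t ^ 2 / 2) := by
    intro y
    have h2 := intervalIntegral.integral_Iic_sub_Iic (μ := volume) (a := 0) (b := y)
      gdens_integrable.integrableOn gdens_integrable.integrableOn
    unfold Phi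
    linarith [h2]
  have h1 : HasDerivAt (fun y : ℝ => Phi 0 + ∫ t in (0:ℝ)..y,
      (Real.sqrt (2 * Real.pi))⁻¹ * Real.exp (-t ^ 2 / 2)) (phi x) x := by
    refine (HasDerivAt.const_add _ ?_)
    exact intervalIntegral.integral_hasDerivAt_right gdens_integrable.intervalIntegrable
      (gdens_cont.stronglyMeasurableAtFilter _ _) gdens_cont.continuousAt
  exact h1.congr_of_eventuallyEq (Filter.Eventually.of_forall fun y => (key y))

lemma Phi_nonneg (x : ℝ) : 0 ≤ Phi x := by
  refine setIntegral_nonneg measurableSet_Iic fun t _ => ?_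
  positivity

lemma Phi_le_one (x : ℝ) : Phi x ≤ 1 := by
  have h1 : Phi x ≤ ∫ t : ℝ, (Real.sqrt (2 * Real.pi))⁻¹ * Real.exp (-t ^ 2 / 2) :=
    setIntegral_le_integral gdens_integrable (Filter.Eventually.of_forall fun t => by positivity)
  have h2 : ∫ t : ℝ, (Real.sqrt (2 * Real.pi))⁻¹ * Real.exp (-t ^ 2 / 2) = 1 := by
    have e : (fun t : ℝ => (Real.sqrt (2 * Real.pi))⁻¹ * Real.exp (-t ^ 2 / 2))
        = fun t : ℝ => (Real.sqrt (2 * Real.pi))⁻¹ * Real.exp (-(1/2) * t ^ 2) :=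
      funext fun t => by ring_nf
    rw [e, integral_const_mul, integral_gaussian]
    have : Real.pi / (1/2) = 2 * Real.pi := by ring
    rw [this]
    exact inv_mul_cancel₀ (by positivity)
  linarith

lemma mul_phi_le_one {x : ℝ} (hx : 0 ≤ x) : x * phi x ≤ 1 := by
  have h1 : x ≤ Real.exp (x ^ 2 / 2) := by
    have := Real.add_one_le_exp (x ^ 2 / 2)
    nlinarith [sq_nonneg (x - 1)]
  have h2 : x * Real.exp (-x ^ 2 / 2) ≤ 1 := by
    have hpos : 0 < Real.exp (x ^ 2 / 2) := Real.exp_pos _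
    have : Real.exp (-x ^ 2 / 2) = (Real.exp (x ^ 2 / 2))⁻¹ := by
      rw [← Real.exp_neg]; ring_nf
    rw [this]
    rw [mul_inv_le_iff₀ hpos, one_mul]
    exact h1
  have h3 : (Real.sqrt (2 * Real.pi))⁻¹ ≤ 1 := by
    rw [inv_le_one_iff₀]
    right
    rw [show (1:ℝ) = Real.sqrt 1 from (Real.sqrt_one).symm]
    exact Real.sqrt_le_sqrt (by nlinarith [Real.pi_gt_three])
  unfold phi
  calc x * ((Real.sqrt (2 * Real.pi))⁻¹ * Real.exp (-x ^ 2 / 2))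
      ≤ x * (1 * Real.exp (-x ^ 2 / 2)) := by
        apply mul_le_mul_of_nonneg_left _ hx
        exact mul_le_mul_of_nonneg_right h3 (Real.exp_pos _).le
    _ = x * Real.exp (-x ^ 2 / 2) := by ring
    _ ≤ 1 := h2


/-- Let `(Ω, P)` be a probability space and `I : Ω → [0, ∞)` measurable.
Define `h(ℓ) = 2ℓ²·E[Φ(−ℓ·√I/2)]` for `ℓ > 0`. If `ℓ̂ ∈ (0, ∞)` maximizes `h` over `(0, ∞)`,
then the first-order stationarity condition holds:
`2·E[Φ(−ℓ̂·√I/2)] = E[(ℓ̂·√I/2)·φ(ℓ̂·√I/2)]`. -/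
theorem first_order_condition_of_maximizer
    {Ω : Type*} [MeasurableSpace Ω] (P : Measure Ω) [IsProbabilityMeasure P]
    (I : Ω → ℝ) (hIme : Measurable I) (hInn : ∀ ω, 0 ≤ I ω)
    (lhat : ℝ) (hlhat : 0 < lhat)
    (hmax : ∀ ℓ : ℝ, 0 < ℓ →
      2 * ℓ ^ 2 * ∫ ω, Phi (-(ℓ * Real.sqrt (I ω)) / 2) ∂P ≤
        2 * lhat ^ 2 * ∫ ω, Phi (-(lhat * Real.sqrt (I ω)) / 2) ∂P) :
    2 * ∫ ω, Phi (-(lhat * Real.sqrt (I ω)) / 2) ∂P =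
      ∫ ω, (lhat * Real.sqrt (I ω) / 2) * phi (lhat * Real.sqrt (I ω) / 2) ∂P := by
  have hs : Measurable fun ω => Real.sqrt (I ω) := Real.continuous_sqrt.measurable.comp hIme
  have hsnn : ∀ ω, 0 ≤ Real.sqrt (I ω) := fun ω => Real.sqrt_nonneg _
  have Phi_cont : Continuous Phi :=
    continuous_iff_continuousAt.2 fun x => (hasDerivAt_Phi x).continuousAt
  -- measurability of F ℓ
  have hFmeas : ∀ ℓ : ℝ, AEStronglyMeasurable (fun ω => Phi (-(ℓ * Real.sqrt (I ω)) / 2)) P := by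
    intro ℓ
    exact (Phi_cont.measurable.comp (((hs.const_mul ℓ).neg).div_const 2)).aestronglyMeasurable
  have hF'meas : AEStronglyMeasurable
      (fun ω => -(Real.sqrt (I ω) / 2) * phi (lhat * Real.sqrt (I ω) / 2)) P := by
    apply Measurable.aestronglyMeasurable
    exact ((hs.div_const 2).neg).mul
      (phi_cont.measurable.comp ((hs.const_mul lhat).div_const 2))
  have hFint : Integrable (fun ω => Phi (-(lhat * Real.sqrt (I ω)) / 2)) P := by
    refine Integrable.mono' (integrable_const 1) (hFmeas lhat)
      (Filter.Eventually.of_forall fun ω => ?_)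
    rw [Real.norm_eq_abs, abs_le]
    exact ⟨by linarith [Phi_nonneg (-(lhat * Real.sqrt (I ω)) / 2)],
      Phi_le_one _⟩
  -- derivative of integrand in ℓ
  have hdiff : ∀ (ω : Ω) (ℓ : ℝ),
      HasDerivAt (fun ℓ : ℝ => Phi (-(ℓ * Real.sqrt (I ω)) / 2))
        (-(Real.sqrt (I ω) / 2) * phi (ℓ * Real.sqrt (I ω) / 2)) ℓ := by
    intro ω ℓ
    set s := Real.sqrt (I ω) with hsdef
    have inner : HasDerivAt (fun ℓ : ℝ => -(ℓ * s) / 2) (-s / 2) ℓ := by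
      have h0 : HasDerivAt (fun ℓ : ℝ => ℓ * s) (1 * s) ℓ := (hasDerivAt_id ℓ).mul_const s
      have := (h0.neg).div_const 2
      simpa [neg_div] using this
    have := (hasDerivAt_Phi (-(ℓ * s) / 2)).comp ℓ inner
    refine this.congr_deriv ?_
    have : -(ℓ * s) / 2 = -(ℓ * s / 2) := by ring
    rw [this, phi_neg]
    ring
  -- bound
  have hbound : ∀ᵐ ω ∂P, ∀ ℓ ∈ Metric.ball lhat (lhat / 2),
      ‖-(Real.sqrt (I ω) / 2) * phi (ℓ * Real.sqrt (I ω) / 2)‖ ≤ 2 / lhat := by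
    refine Filter.Eventually.of_forall fun ω ℓ hℓ => ?_
    set s := Real.sqrt (I ω) with hsdef
    have hℓ' : lhat / 2 < ℓ := by
      rw [Metric.mem_ball, Real.dist_eq, abs_lt] at hℓ
      linarith
    have hℓpos : 0 < ℓ := by linarith
    have hkey : (ℓ * s / 2) * phi (ℓ * s / 2) ≤ 1 :=
      mul_phi_le_one (by positivity)
    have hp : 0 ≤ phi (ℓ * s / 2) := phi_nonneg _
    have hsn : 0 ≤ s := hsnn ω
    rw [norm_mul, Real.norm_eq_abs, Real.norm_eq_abs, abs_neg, abs_of_nonneg (by positivity),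
      abs_of_nonneg hp]
    rw [le_div_iff₀ hlhat]
    nlinarith [mul_nonneg (by linarith : (0:ℝ) ≤ 2 * ℓ - lhat) (mul_nonneg hsn hp)]
  -- differentiation under the integral
  obtain ⟨hF'int, hg⟩ := hasDerivAt_integral_of_dominated_loc_of_deriv_le
    (Metric.ball_mem_nhds lhat (show (0:ℝ) < lhat / 2 by linarith))
    (Filter.Eventually.of_forall fun ℓ => hFmeas ℓ) hFint hF'meas hbound
    (integrable_const (2 / lhat))
    (Filter.Eventually.of_forall fun ω ℓ _ => hdiff ω ℓ)
  set g : ℝ → ℝ := fun ℓ => ∫ ω, Phi (-(ℓ * Real.sqrt (I ω)) / 2) ∂P with hgdef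
  set D : ℝ := ∫ ω, -(Real.sqrt (I ω) / 2) * phi (lhat * Real.sqrt (I ω) / 2) ∂P with hDdef
  have hh : HasDerivAt (fun ℓ => 2 * ℓ ^ 2 * g ℓ)
      (2 * (↑2 * lhat ^ 1) * g lhat + 2 * lhat ^ 2 * D) lhat :=
    (((hasDerivAt_pow 2 lhat).const_mul 2).mul hg)
  have hloc : IsLocalMax (fun ℓ => 2 * ℓ ^ 2 * g ℓ) lhat := by
    refine Filter.eventually_of_mem (isOpen_Ioi.mem_nhds hlhat) fun ℓ hℓ => hmax ℓ hℓ
  have hzero : 2 * (↑2 * lhat ^ 1) * g lhat + 2 * lhat ^ 2 * D = 0 :=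
    hloc.hasDerivAt_eq_zero hh
  -- identify RHS with -lhat * D
  have hRHS : (∫ ω, (lhat * Real.sqrt (I ω) / 2) * phi (lhat * Real.sqrt (I ω) / 2) ∂P)
      = -lhat * D := by
    rw [hDdef, ← integral_const_mul]
    congr 1
    funext ω
    ring
  rw [hRHS]
  have hne : (2 : ℝ) * lhat ≠ 0 := by positivity
  apply mul_left_cancel₀ hne
  simp only [pow_one, pow_two] at hzero ⊢
  push_cast at hzero
  nlinarith [hzero]
end
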